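/- Let a, b > 0 and consider the right tetrahedron with vertices A = (0,0,0), B = (a,0,0), C = (0,b,0), D = (0,0,1) in ℝ³. Let s_a, s_b, s_c, s_d be the orthogonal affine reflections across the affine planes spanned by {B,C,D}, {A,C,D}, {A,B,D}, {A,B,C} respectively, and let s = s_a ∘ s_d ∘ s_c ∘ s_b. Then the linear part of s equals −S_a, where S_a is the linear orthogonal reflection across the plane through the origin with normal vector n = (b, a, ab); moreover s(A) = s_a(A), so that s(A) − A is a nonzero scalar multiple of n. In particular, the vertex A lies on the axis {x ∈ ℝ³ : s(x) − x ∈ ℝ·n} of the screw motion s. -/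

import Mathlib

noncomputable section

/-- The orthogonal affine reflection of `ℝ³` across the affine plane spanned by three
points `p, q, r`. -/
def faceRefl (p q r : EuclideanSpace ℝ (Fin 3)) :
    EuclideanSpace ℝ (Fin 3) ≃ᵃⁱ[ℝ] EuclideanSpace ℝ (Fin 3) :=
  EuclideanGeometry.reflection (affineSpan ℝ {p, q, r})

section Aux

open EuclideanGeometry RealInnerProductSpace

def pt (u v w : ℝ) : EuclideanSpace ℝ (Fin 3) := !₂[u, v, w]

@[simp] lemma pt_0 (u v w : ℝ) : pt u v w 0 = u := rfl
@[simp] lemma pt_1 (u v w : ℝ) : pt u v w 1 = v := rfl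
@[simp] lemma pt_2 (u v w : ℝ) : pt u v w 2 = w := rfl

variable {E : Type*} [NormedAddCommGroup E] [InnerProductSpace ℝ E]

lemma orthProj_eq {S : AffineSubspace ℝ E} [Nonempty S] [S.direction.HasOrthogonalProjection]
    {x y : E} (hy : y ∈ S) (h : x - y ∈ S.directionᗮ) :
    (EuclideanGeometry.orthogonalProjection S x : E) = y := by
  have hsing := EuclideanGeometry.inter_eq_singleton_orthogonalProjection (s := S) x
  have hy2 : y ∈ (S : Set E) ∩ AffineSubspace.mk' x S.directionᗮ := by
    refine ⟨hy, AffineSubspace.mem_mk'.2 ?_⟩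
    simpa [neg_sub] using S.directionᗮ.neg_mem h
  rw [hsing] at hy2
  exact hy2.symm

lemma refl_eq {S : AffineSubspace ℝ E} [Nonempty S] [S.direction.HasOrthogonalProjection]
    {x y : E} (hy : y ∈ S) (h : x - y ∈ S.directionᗮ) :
    EuclideanGeometry.reflection S x = y + y - x := by
  rw [EuclideanGeometry.reflection_apply_of_mem S x hy, vsub_eq_sub,
    Submodule.reflection_mem_subspace_orthogonalComplement_eq_neg h]
  simp [vadd_eq_add]; abel

lemma mem_span3 {p q r y : E} (c1 c2 : ℝ) (hy : y = c1 • (q - p) + c2 • (r - p) + p) :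
    y ∈ affineSpan ℝ ({p, q, r} : Set E) := by
  have hp : p ∈ affineSpan ℝ ({p, q, r} : Set E) := subset_affineSpan ℝ _ (by simp)
  have hq : q ∈ affineSpan ℝ ({p, q, r} : Set E) := subset_affineSpan ℝ _ (by simp)
  have hr : r ∈ affineSpan ℝ ({p, q, r} : Set E) := subset_affineSpan ℝ _ (by simp)
  have h1 : q - p ∈ (affineSpan ℝ ({p, q, r} : Set E)).direction := by
    simpa [vsub_eq_sub] using AffineSubspace.vsub_mem_direction hq hp
  have h2 : r - p ∈ (affineSpan ℝ ({p, q, r} : Set E)).direction := by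
    simpa [vsub_eq_sub] using AffineSubspace.vsub_mem_direction hr hp
  have := AffineSubspace.vadd_mem_of_mem_direction
    (Submodule.add_mem _ (Submodule.smul_mem _ c1 h1) (Submodule.smul_mem _ c2 h2)) hp
  simpa [vadd_eq_add, ← hy] using this

lemma mem_orth3 {p q r w : E} (h1 : ⟪q - p, w⟫ = 0) (h2 : ⟪r - p, w⟫ = 0) :
    w ∈ (affineSpan ℝ ({p, q, r} : Set E)).directionᗮ := by
  rw [direction_affineSpan, Submodule.mem_orthogonal]
  intro u hu
  have hps : p ∈ ({p, q, r} : Set E) := by simp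
  rw [vectorSpan_eq_span_vsub_set_right ℝ hps] at hu
  induction hu using Submodule.span_induction with
  | mem z hz =>
    obtain ⟨v, hv, rfl⟩ := hz
    rcases hv with rfl | rfl | rfl
    · simp
    · simpa [vsub_eq_sub] using h1
    · simpa [vsub_eq_sub] using h2
  | zero => simp
  | add _ _ _ _ ha hb => rw [inner_add_left, ha, hb, add_zero]
  | smul c _ _ ha => rw [inner_smul_left, ha, mul_zero]

instance span3_nonempty (p q r : EuclideanSpace ℝ (Fin 3)) :
    Nonempty (affineSpan ℝ ({p, q, r} : Set (EuclideanSpace ℝ (Fin 3)))) :=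
  ⟨⟨p, subset_affineSpan ℝ _ (by simp)⟩⟩

lemma rb_apply (b : ℝ) (hb : b ≠ 0) (x : EuclideanSpace ℝ (Fin 3)) :
    faceRefl (pt (0) (0) (0)) (pt (0) (b) (0)) (pt (0) (0) (1)) x = (pt (-(x 0)) (x 1) (x 2)) := by
  rw [faceRefl, refl_eq (E := EuclideanSpace ℝ (Fin 3)) (y := (pt (0) (x 1) (x 2)))]
  · ext i; fin_cases i <;> simp <;> ring
  · refine mem_span3 (x 1 / b) (x 2) ?_
    ext i; fin_cases i <;> simp <;> field_simp
  · refine mem_orth3 ?_ ?_ <;>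
      simp [PiLp.inner_apply, Fin.sum_univ_three]

lemma rc_apply (a : ℝ) (ha : a ≠ 0) (x : EuclideanSpace ℝ (Fin 3)) :
    faceRefl (pt (0) (0) (0)) (pt (a) (0) (0)) (pt (0) (0) (1)) x = (pt (x 0) (-(x 1)) (x 2)) := by
  rw [faceRefl, refl_eq (E := EuclideanSpace ℝ (Fin 3)) (y := (pt (x 0) (0) (x 2)))]
  · ext i; fin_cases i <;> simp
  · refine mem_span3 (x 0 / a) (x 2) ?_
    ext i; fin_cases i <;> (simp; try field_simp)
  · refine mem_orth3 ?_ ?_ <;> simp [PiLp.inner_apply, Fin.sum_univ_three]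

lemma rd_apply (a b : ℝ) (ha : a ≠ 0) (hb : b ≠ 0) (x : EuclideanSpace ℝ (Fin 3)) :
    faceRefl (pt (0) (0) (0)) (pt (a) (0) (0)) (pt (0) (b) (0)) x = (pt (x 0) (x 1) (-(x 2))) := by
  rw [faceRefl, refl_eq (E := EuclideanSpace ℝ (Fin 3)) (y := (pt (x 0) (x 1) (0)))]
  · ext i; fin_cases i <;> simp
  · refine mem_span3 (x 0 / a) (x 1 / b) ?_
    ext i; fin_cases i <;> (simp; try field_simp)
  · refine mem_orth3 ?_ ?_ <;> simp [PiLp.inner_apply, Fin.sum_univ_three]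

lemma ra_apply (a b : ℝ) (ha : 0 < a) (hb : 0 < b) (x : EuclideanSpace ℝ (Fin 3)) :
    faceRefl (pt (a) (0) (0)) (pt (0) (b) (0)) (pt (0) (0) (1)) x =
      x - ((2 * ((b * x 0 + a * x 1 + a * b * x 2) - a * b)) / (b^2 + a^2 + (a*b)^2))
        • pt b a (a*b) := by
  have hN : b^2 + a^2 + (a*b)^2 ≠ 0 := by positivity
  set t : ℝ := ((b * x 0 + a * x 1 + a * b * x 2) - a * b) / (b^2 + a^2 + (a*b)^2) with ht
  have h2t : (2 * ((b * x 0 + a * x 1 + a * b * x 2) - a * b)) / (b^2 + a^2 + (a*b)^2)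
      = 2 * t := by rw [ht]; ring
  rw [faceRefl, refl_eq (E := EuclideanSpace ℝ (Fin 3))
    (y := x - t • pt b a (a*b))]
  · rw [h2t]; ext i; fin_cases i <;> (simp [PiLp.sub_apply, PiLp.smul_apply]; try ring)
  · refine mem_span3 ((x 1 - t * a) / b) (x 2 - t * a * b) ?_
    ext i
    fin_cases i <;> simp [PiLp.sub_apply, PiLp.smul_apply] <;> (rw [ht]; field_simp; try ring)
  · refine mem_orth3 ?_ ?_ <;>
      (simp [PiLp.inner_apply, Fin.sum_univ_three, PiLp.sub_apply, PiLp.smul_apply]; try ring)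

abbrev E3 := EuclideanSpace ℝ (Fin 3)

lemma pt000_eq_zero : pt 0 0 0 = (0 : E3) := by
  ext i; fin_cases i <;> rfl

lemma main (a b : ℝ) (ha : 0 < a) (hb : 0 < b) :
    let A : E3 := pt 0 0 0
    let B : E3 := pt a 0 0
    let C : E3 := pt 0 b 0
    let D : E3 := pt 0 0 1
    let n : E3 := pt b a (a*b)
    let Sa : E3 ≃ₗᵢ[ℝ] E3 := Submodule.reflection (Submodule.span ℝ {n})ᗮ
    let s : E3 ≃ᵃⁱ[ℝ] E3 :=
      (((faceRefl A C D).trans (faceRefl A B D)).trans (faceRefl A B C)).trans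
        (faceRefl B C D)
    (∀ v : E3, s.linearIsometryEquiv v = -(Sa v)) ∧
    s A = faceRefl B C D A ∧
    (∃ k : ℝ, k ≠ 0 ∧ s A - A = k • n) ∧
    A ∈ {x : E3 | ∃ k : ℝ, s x - x = k • n} := by
  intro A B C D n Sa s
  have hA : A = pt 0 0 0 := rfl
  have hB : B = pt a 0 0 := rfl
  have hC : C = pt 0 b 0 := rfl
  have hD : D = pt 0 0 1 := rfl
  have hn : n = pt b a (a*b) := rfl
  have hN : b^2 + a^2 + (a*b)^2 ≠ 0 := by positivity
  set N : ℝ := b^2 + a^2 + (a*b)^2 with hNdef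
  have hs : ∀ x : E3, s x =
      -x + ((2 * ((b * x 0 + a * x 1 + a * b * x 2) + a * b)) / N) • n := by
    intro x
    show (faceRefl B C D) ((faceRefl A B C) ((faceRefl A B D) ((faceRefl A C D) x))) = _
    rw [rb_apply b hb.ne' x, rc_apply a ha.ne', rd_apply a b ha.ne' hb.ne', ra_apply a b ha hb]
    ext i
    fin_cases i <;>
      (simp [hA, hB, hC, hD, hn, pt, PiLp.sub_apply, PiLp.smul_apply, PiLp.add_apply, PiLp.neg_apply]; try ring)
  have hnormn : (‖(pt b a (a*b) : E3)‖ : ℝ)^2 = N := by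
    rw [← real_inner_self_eq_norm_sq, PiLp.inner_apply]
    simp [PiLp.inner_apply, Fin.sum_univ_three, pt, hNdef]
  have hSa : ∀ v : E3, Sa v = v - ((2 * (b * v 0 + a * v 1 + a * b * v 2)) / N) • n := by
    intro v
    show Submodule.reflection (Submodule.span ℝ {(pt b a (a*b) : E3)})ᗮ v = _
    rw [Submodule.reflection_orthogonal_apply, Submodule.reflection_singleton_apply]
    have hin : ⟪(pt b a (a*b) : E3), v⟫ = b * v 0 + a * v 1 + a * b * v 2 := by
      simp [PiLp.inner_apply, Fin.sum_univ_three, pt]; try ring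
    rw [hin]
    simp only [RCLike.ofReal_real_eq_id, id, hnormn]
    ext i
    fin_cases i <;>
      (simp [hA, hB, hC, hD, hn, pt, two_smul, PiLp.sub_apply, PiLp.smul_apply,
        PiLp.add_apply, PiLp.neg_apply]; try ring)
  have hsA : s A - A = ((2 * (a*b)) / N) • n := by
    rw [hs A]
    ext i
    fin_cases i <;>
      (simp [hA, hB, hC, hD, hn, pt, PiLp.sub_apply, PiLp.smul_apply, PiLp.add_apply, PiLp.neg_apply]; try ring)
  refine ⟨?_, ?_, ?_, ?_⟩
  · intro v
    have hlin : s.linearIsometryEquiv v = s (v +ᵥ A) -ᵥ s A := by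
      rw [s.map_vadd]; simp
    rw [hlin, hSa, hs, hs]
    have hA0 : A = (0 : E3) := pt000_eq_zero
    rw [hA0]
    ext i
    fin_cases i <;>
      (simp [hA, hB, hC, hD, hn, pt, PiLp.sub_apply, PiLp.smul_apply, PiLp.add_apply, PiLp.neg_apply]; try ring)
  · rw [hs A, ra_apply a b ha hb]
    ext i
    fin_cases i <;>
      (simp [hA, hB, hC, hD, hn, pt, PiLp.sub_apply, PiLp.smul_apply, PiLp.add_apply, PiLp.neg_apply]; try ring)
  · exact ⟨(2 * (a*b)) / N, div_ne_zero (by positivity) hN, hsA⟩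
  · exact ⟨(2 * (a*b)) / N, hsA⟩

end Aux

/-- In the right tetrahedron `A = (0,0,0)`, `B = (a,0,0)`, `C = (0,b,0)`, `D = (0,0,1)`
(`a, b > 0`), with `s = s_a ∘ s_d ∘ s_c ∘ s_b` the composition of the affine reflections
across the faces opposite `A, D, C, B`, the linear part of `s` is `-S_a` where `S_a` is
the linear orthogonal reflection across the plane through the origin with normal
`n = (b, a, ab)`; moreover `s A = s_a A`, so `s A - A` is a nonzero multiple of `n` and
the vertex `A` lies on the axis `{x | s x - x ∈ ℝ·n}` of the screw motion `s`. -/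
theorem right_tetrahedron_fagnano_through_vertex (a b : ℝ) (ha : 0 < a) (hb : 0 < b) :
    let A : EuclideanSpace ℝ (Fin 3) := !₂[0, 0, 0]
    let B : EuclideanSpace ℝ (Fin 3) := !₂[a, 0, 0]
    let C : EuclideanSpace ℝ (Fin 3) := !₂[0, b, 0]
    let D : EuclideanSpace ℝ (Fin 3) := !₂[0, 0, 1]
    let n : EuclideanSpace ℝ (Fin 3) := !₂[b, a, a * b]
    let Sa : EuclideanSpace ℝ (Fin 3) ≃ₗᵢ[ℝ] EuclideanSpace ℝ (Fin 3) :=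
      Submodule.reflection (Submodule.span ℝ {n})ᗮ
    let s : EuclideanSpace ℝ (Fin 3) ≃ᵃⁱ[ℝ] EuclideanSpace ℝ (Fin 3) :=
      (((faceRefl A C D).trans (faceRefl A B D)).trans (faceRefl A B C)).trans
        (faceRefl B C D)
    (∀ v : EuclideanSpace ℝ (Fin 3), s.linearIsometryEquiv v = -(Sa v)) ∧
    s A = faceRefl B C D A ∧
    (∃ k : ℝ, k ≠ 0 ∧ s A - A = k • n) ∧
    A ∈ {x : EuclideanSpace ℝ (Fin 3) | ∃ k : ℝ, s x - x = k • n} := by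
  exact main a b ha hb
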